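/- Let (A[z],σ) be an R-extension of a difference ring (A,σ) of order λ with σ(z) = a·z (so const(A[z],σ) = const(A,σ), z^λ = 1). Then a is a primitive λ-th root of unity and ord(z^k) = ord(a^k) for all 0 ≤ k ≤ λ. -/
import Mathlib


/-- For an R-extension `A[z]` of order `lam` (`z^lam = 1`, `σ z = a·z`, constants
unchanged), `a` is a primitive `lam`-th root of unity and `ord(z^k) = ord(a^k)` for
all `0 ≤ k ≤ lam`. -/
theorem stmt_9 (A E : Type*) [CommRing A] [CharZero A] [CommRing E]
    (σA : A ≃+* A) (σE : E ≃+* E) (ι : A →+* E)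
    (hinj : Function.Injective ι)
    (hcomm : ∀ c : A, σE (ι c) = ι (σA c))
    (lam : ℕ) (hlam : 1 < lam) (z : E) (a : A) (ha : IsUnit a)
    (hz : z ^ lam = 1) (hσz : σE z = ι a * z)
    (hbasis : ∀ f : E, ∃! c : Fin lam → A, f = ∑ i : Fin lam, ι (c i) * z ^ (i : ℕ))
    (hconst : ∀ f : E, σE f = f → ∃ c : A, σA c = c ∧ f = ι c) :
    (a ^ lam = 1 ∧ ∀ j : ℕ, 1 ≤ j → j < lam → a ^ j ≠ 1) ∧
      ∀ k : ℕ, k ≤ lam → orderOf (z ^ k) = orderOf (a ^ k) := by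
  have hlam0 : 0 < lam := by omega
  have hrep : ∀ j : Fin lam,
      (∑ i : Fin lam, ι (if i = j then (1:A) else 0) * z ^ (i:ℕ)) = z ^ (j:ℕ) := by
    intro j
    simp [apply_ite ι, ite_mul]
  have hrep0 : ∀ c : A,
      (∑ i : Fin lam, ι (if i = (⟨0, hlam0⟩ : Fin lam) then c else 0) * z ^ (i:ℕ)) = ι c := by
    intro c
    simp [apply_ite ι, ite_mul]
  -- key: z^j is not in the image of ι for 1 ≤ j < lam
  have hL : ∀ j : ℕ, 1 ≤ j → j < lam → ∀ c : A, z ^ j ≠ ι c := by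
    intro j h1 h2 c hzc
    obtain ⟨f, hf, huniq⟩ := hbasis (ι c)
    have e1 : (fun i : Fin lam => if i = ⟨j, h2⟩ then (1:A) else 0) = f := by
      apply huniq
      rw [← hzc]
      exact (hrep ⟨j, h2⟩).symm
    have e2 : (fun i : Fin lam => if i = ⟨0, hlam0⟩ then c else 0) = f := by
      apply huniq
      exact (hrep0 c).symm
    have := congrFun (e1.trans e2.symm) ⟨j, h2⟩
    simp [Fin.ext_iff, show j ≠ 0 by omega] at this
  have halam : a ^ lam = 1 := by
    apply hinj
    rw [map_pow, map_one]
    have h := congrArg σE hz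
    rw [map_pow, hσz, mul_pow, map_one, hz, mul_one] at h
    exact h
  have hprim : ∀ j : ℕ, 1 ≤ j → j < lam → a ^ j ≠ 1 := by
    intro j h1 h2 haj
    have hσzj : σE (z ^ j) = z ^ j := by
      rw [map_pow, hσz, mul_pow, ← map_pow, haj, map_one, one_mul]
    obtain ⟨c, _, hc⟩ := hconst _ hσzj
    exact hL j h1 h2 c hc
  have hoz : orderOf z = lam := by
    rw [orderOf_eq_iff hlam0]
    refine ⟨hz, fun m hm hm' h => ?_⟩
    exact hL m hm' hm 1 (by rw [h, map_one])
  have hoa : orderOf a = lam := by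
    rw [orderOf_eq_iff hlam0]
    exact ⟨halam, fun m hm hm' h => hprim m hm' hm h⟩
  refine ⟨⟨halam, hprim⟩, fun k _ => ?_⟩
  rcases Nat.eq_zero_or_pos k with rfl | hk0
  · simp
  · rw [orderOf_pow' z hk0.ne', orderOf_pow' a hk0.ne', hoz, hoa]
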